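/- For all t > 0, −f''(t)/f(t) + (n−1)·(1 − f'(t)²)/f(t)² − (m−1)·h'(t)·f'(t)/(h(t)·f(t)) = 0. (This is the exact vanishing of the lower bound used for the Ricci curvature of the Sha–Yang doubly warped metric in the directions of the factor M, given Ric^g ≥ n−1.) -/

import Mathlib

/-- Exact vanishing of the lower bound for the Ricci curvature of the Sha–Yang doubly
warped metric in the directions of the factor `M`: for all `t > 0`,
`−f''(t)/f(t) + (n−1)·(1 − f'(t)²)/f(t)² − (m−1)·h'(t)·f'(t)/(h(t)·f(t)) = 0`. -/
theorem shaYang_Ric_M_vanishing (n m : ℕ) (hn : 2 ≤ n) (hm : 2 ≤ m)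
    (α : ℝ) (hα : α = 2 * ((n : ℝ) - 1) / (m : ℝ))
    (f : ℝ → ℝ) (hf : ContDiff ℝ 2 f)
    (hf0 : f 0 = 1) (hf'0 : deriv f 0 = 0)
    (hfpos : ∀ t ≥ (0 : ℝ), 0 < f t)
    (hode : ∀ t ≥ (0 : ℝ), deriv (deriv f) t = (α / 2) * (f t) ^ (-α - 1))
    (h : ℝ → ℝ) (hh : h = fun t => (2 / α) * deriv f t) :
    ∀ t > (0 : ℝ),
      -(deriv (deriv f) t) / f t
          + ((n : ℝ) - 1) * (1 - (deriv f t) ^ 2) / (f t) ^ 2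
          - ((m : ℝ) - 1) * (deriv h t * deriv f t) / (h t * f t) = 0 := by
  have hm0 : (0 : ℝ) < m := by positivity
  have hn1 : (1 : ℝ) ≤ (n : ℝ) - 1 := by
    have : (2 : ℝ) ≤ n := by exact_mod_cast hn
    linarith
  have hα0 : 0 < α := by rw [hα]; positivity
  have h2 : (2 : WithTop ℕ∞) = 1 + 1 := by norm_num
  rw [h2] at hf
  have hfd : Differentiable ℝ f := (contDiff_succ_iff_deriv.mp hf).1
  have hf1 : ContDiff ℝ 1 (deriv f) := (contDiff_succ_iff_deriv.mp hf).2.2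
  have hfd' : Differentiable ℝ (deriv f) := hf1.differentiable one_ne_zero
  -- energy identity
  have energy : ∀ t ≥ (0 : ℝ), (deriv f t) ^ 2 + (f t) ^ (-α) = 1 := by
    intro t ht
    set g : ℝ → ℝ := fun x => (deriv f x) ^ 2 + (f x) ^ (-α) with hg
    have key : ∀ x ∈ Set.Icc (0:ℝ) t, g x = g 0 := by
      apply constant_of_has_deriv_right_zero
      · apply ContinuousOn.add
        · exact ((hfd'.continuous).pow 2).continuousOn
        · exact (hfd.continuous.continuousOn).rpow_const
            (fun x hx => Or.inl (ne_of_gt (hfpos x hx.1)))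
      · intro x hx
        have hx0 : (0:ℝ) ≤ x := hx.1
        have hfx : 0 < f x := hfpos x hx0
        have d1 : HasDerivAt (fun y => (deriv f y) ^ 2)
            (2 * deriv f x * deriv (deriv f) x) x := by
          have := ((hfd' x).hasDerivAt).fun_pow 2
          simpa [mul_comm, mul_assoc, mul_left_comm] using this
        have d2 : HasDerivAt (fun y => (f y) ^ (-α))
            (deriv f x * (-α) * (f x) ^ (-α - 1)) x :=
          (hfd x).hasDerivAt.rpow_const (Or.inl (ne_of_gt hfx))
        have dsum := d1.add d2
        have hz : 2 * deriv f x * deriv (deriv f) x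
            + deriv f x * (-α) * (f x) ^ (-α - 1) = 0 := by
          rw [hode x hx0]; ring
        rw [hz] at dsum
        exact dsum.hasDerivWithinAt
    have := key t (Set.mem_Icc.mpr ⟨le_refl 0 |>.trans ht, le_refl t⟩)
    simpa [hg, hf'0, hf0, Real.one_rpow] using this
  -- positivity of deriv f on t > 0
  have hf'pos : ∀ t > (0 : ℝ), 0 < deriv f t := by
    intro t ht
    have hmono : StrictMonoOn (deriv f) (Set.Ici (0:ℝ)) := by
      apply strictMonoOn_of_deriv_pos (convex_Ici 0) (hfd'.continuous.continuousOn)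
      intro x hx
      rw [interior_Ici] at hx
      have hx0 : (0:ℝ) ≤ x := le_of_lt hx
      rw [hode x hx0]
      have := hfpos x hx0
      positivity
    have := hmono (Set.self_mem_Ici) (Set.mem_Ici.mpr (le_of_lt ht)) ht
    rwa [hf'0] at this
  intro t ht
  have ht0 : (0:ℝ) ≤ t := le_of_lt ht
  have hF : 0 < f t := hfpos t ht0
  have hF' : 0 < deriv f t := hf'pos t ht
  have hdh : deriv h t = (2 / α) * deriv (deriv f) t := by
    rw [hh]; exact deriv_const_mul _ (hfd' t)
  have hht : h t = (2 / α) * deriv f t := by rw [hh]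
  have hen : 1 - (deriv f t) ^ 2 = (f t) ^ (-α) := by
    have := energy t ht0; linarith
  have hrp : (f t) ^ (-α) = (f t) ^ (-α - 1) * f t := by
    rw [show -α = (-α - 1) + 1 by ring, Real.rpow_add hF, Real.rpow_one]; norm_num
  rw [hdh, hht, hode t ht0, hen, hrp, hα]
  set P := (f t) ^ (-α - 1)
  have hP : 0 < P := Real.rpow_pos_of_pos hF _
  field_simp
  ring
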